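/- Let a : ℝ → M_n(ℂ) be a continuous, T-periodic map into the Hermitian positive semidefinite matrices, and let G solve G(0) = Id, G'(t) = -a(t)G(t). Then the limit C_∞ := lim_{t→∞} -(1/t) ln ‖G(t)‖₂ exists and equals -(1/T)·ln ρ(G(T)), where ρ denotes the spectral radius. -/

import Mathlib

open Matrix Filter
open scoped Matrix.Norms.L2Operator ComplexOrder ENNReal NNReal Topology

set_option maxHeartbeats 1600000 in
/-- For a continuous `T`-periodic Hermitian positive semidefinite damping `a` and `G` solving
`G 0 = 1`, `G' = -aG`, the limit `C_∞ = lim_{t→∞} -(1/t) log ‖G t‖₂` exists and equals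
`-(1/T) log ρ(G T)`, `ρ` the spectral radius. -/
theorem stmt_8 {n : ℕ} (T : ℝ) (hT : 0 < T)
    (a G : ℝ → Matrix (Fin n) (Fin n) ℂ)
    (ha_cont : Continuous a) (ha_psd : ∀ t, (a t).PosSemidef)
    (ha_per : ∀ t, a (t + T) = a t)
    (hG0 : G 0 = 1) (hG : ∀ t, HasDerivAt G (-(a t) * G t) t) :
    Tendsto (fun t : ℝ => -(1 / t) * Real.log ‖G t‖) atTop
      (nhds (-(1 / T) * Real.log ((spectralRadius ℂ (G T)).toReal))) := by
  classical
  rcases Nat.eq_zero_or_pos n with hn | hn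
  · subst hn
    haveI : Subsingleton (Matrix (Fin 0) (Fin 0) ℂ) :=
      ⟨fun A B => by ext i j; exact i.elim0⟩
    have hz : ∀ t, G t = (0 : Matrix (Fin 0) (Fin 0) ℂ) := fun t => Subsingleton.elim _ _
    rw [spectrum.SpectralRadius.of_subsingleton]
    simp only [hz, norm_zero, Real.log_zero, mul_zero, ENNReal.toReal_zero]
    exact tendsto_const_nhds
  haveI : Nonempty (Fin n) := ⟨⟨0, hn⟩⟩
  have hGc : Continuous G := Differentiable.continuous (fun u => (hG u).differentiableAt)
  -- vector norm monotonicity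
  have key : ∀ (x : Fin n → ℂ) (s t : ℝ), s ≤ t →
      ‖(WithLp.equiv 2 (Fin n → ℂ)).symm (G t *ᵥ x)‖ ≤
        ‖(WithLp.equiv 2 (Fin n → ℂ)).symm (G s *ᵥ x)‖ := by
    intro x s t hst
    set L : Matrix (Fin n) (Fin n) ℂ →ₗ[ℂ] EuclideanSpace ℂ (Fin n) :=
      { toFun := fun A => (WithLp.equiv 2 (Fin n → ℂ)).symm (A *ᵥ x)
        map_add' := fun A B => by simp [Matrix.add_mulVec]
        map_smul' := fun c A => by simp [Matrix.smul_mulVec] } with hL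
    set Lc := LinearMap.toContinuousLinearMap L with hLc
    set Lcr := Lc.restrictScalars ℝ with hLcr
    set y : ℝ → EuclideanSpace ℂ (Fin n) := fun t => Lc (G t) with hy
    have hyd : ∀ u, HasDerivAt y (Lc (-(a u) * G u)) u := by
      intro u
      have h0 := (Lcr.hasFDerivAt (x := G u)).comp_hasDerivAt u (hG u)
      exact h0
    set q : ℝ → ℝ := fun u => (inner ℂ (y u) (y u) : ℂ).re with hq
    have hqd : ∀ u, HasDerivAt q
        ((inner ℂ (y u) (Lc (-(a u) * G u)) + inner ℂ (Lc (-(a u) * G u)) (y u) : ℂ).re) u := by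
      intro u
      exact Complex.reCLM.hasFDerivAt.comp_hasDerivAt u ((hyd u).inner ℂ (hyd u))
    have hqanti : Antitone q := by
      apply antitone_of_deriv_nonpos
      · exact fun u => ((hqd u).differentiableAt)
      · intro u
        rw [(hqd u).deriv]
        have h1 : (inner ℂ (Lc (-(a u) * G u)) (y u) : ℂ) =
            starRingEnd ℂ (inner ℂ (y u) (Lc (-(a u) * G u))) := (inner_conj_symm _ _).symm
        rw [h1]
        have h2 : ∀ z : ℂ, (z + starRingEnd ℂ z).re = 2 * z.re := by
          intro z; simp [Complex.add_re, Complex.conj_re]; ring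
        rw [h2]
        have h3 : (inner ℂ (y u) (Lc (-(a u) * G u)) : ℂ).re ≤ 0 := by
          have hyu : y u = (WithLp.equiv 2 (Fin n → ℂ)).symm (G u *ᵥ x) := rfl
          have hd : Lc (-(a u) * G u) =
              (WithLp.equiv 2 (Fin n → ℂ)).symm (-((a u) *ᵥ (G u *ᵥ x))) := by
            show (WithLp.equiv 2 (Fin n → ℂ)).symm ((-(a u) * G u) *ᵥ x) = _
            rw [← Matrix.mulVec_mulVec, Matrix.neg_mulVec]
          have hip : ∀ p q : Fin n → ℂ, inner ℂ ((WithLp.equiv 2 (Fin n → ℂ)).symm p)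
              ((WithLp.equiv 2 (Fin n → ℂ)).symm q) = star p ⬝ᵥ q := fun p q => by
            rw [dotProduct_comm]; rfl
          rw [hyu, hd, hip, dotProduct_neg]
          have hps := (ha_psd u).re_dotProduct_nonneg (G u *ᵥ x)
          simp only [RCLike.re_to_complex] at hps
          simp only [Complex.neg_re]
          linarith
        linarith
    have hmono := hqanti hst
    have hnorm : ∀ u : ℝ, q u = ‖y u‖ ^ 2 := by
      intro u
      have h5 : RCLike.re (inner ℂ (y u) (y u) : ℂ) = ‖y u‖ ^ 2 := inner_self_eq_norm_sq _
      simpa only [RCLike.re_to_complex] using h5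
    have h6 : ‖y t‖ ^ 2 ≤ ‖y s‖ ^ 2 := by rw [← hnorm, ← hnorm]; exact hmono
    have h7 := Real.sqrt_le_sqrt h6
    rwa [Real.sqrt_sq (norm_nonneg _), Real.sqrt_sq (norm_nonneg _)] at h7
  -- matrix norm monotonicity
  have hApply : ∀ (A : Matrix (Fin n) (Fin n) ℂ) (z : EuclideanSpace ℂ (Fin n)),
      ((Matrix.toEuclideanLin.trans LinearMap.toContinuousLinearMap) A) z =
        (WithLp.equiv 2 (Fin n → ℂ)).symm (A *ᵥ (WithLp.equiv 2 (Fin n → ℂ) z)) := by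
    intro A z
    simp only [LinearEquiv.trans_apply, LinearMap.coe_toContinuousLinearMap']
    rw [Matrix.toEuclideanLin_apply]
    rfl
  have hGmono : ∀ s t : ℝ, s ≤ t → ‖G t‖ ≤ ‖G s‖ := by
    intro s t hst
    rw [Matrix.l2_opNorm_def, Matrix.l2_opNorm_def]
    apply ContinuousLinearMap.opNorm_le_bound _ (norm_nonneg _)
    intro z
    rw [hApply]
    calc ‖(WithLp.equiv 2 (Fin n → ℂ)).symm (G t *ᵥ (WithLp.equiv 2 (Fin n → ℂ) z))‖
        ≤ ‖(WithLp.equiv 2 (Fin n → ℂ)).symm (G s *ᵥ (WithLp.equiv 2 (Fin n → ℂ) z))‖ :=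
          key _ s t hst
      _ = ‖((Matrix.toEuclideanLin.trans LinearMap.toContinuousLinearMap) (G s)) z‖ := by
          rw [hApply]
      _ ≤ ‖(Matrix.toEuclideanLin.trans LinearMap.toContinuousLinearMap) (G s)‖ * ‖z‖ :=
          ContinuousLinearMap.le_opNorm _ _
  -- cocycle identity
  have hcoc : ∀ s : ℝ, 0 ≤ s → G (s + T) = G s * G T := by
    intro s hs
    obtain ⟨C, hC⟩ := (isCompact_Icc (a := (0:ℝ)) (b := s)).exists_bound_of_continuousOn
      ha_cont.continuousOn
    set C' := max C 0 with hC'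
    have hCa : ∀ u ∈ Set.Icc (0:ℝ) s, ‖a u‖ ≤ C' := fun u hu => (hC u hu).trans (le_max_left _ _)
    set D : ℝ → Matrix (Fin n) (Fin n) ℂ := fun u => G (u + T) - G u * G T with hD
    have hDd : ∀ u, HasDerivAt D (-(a u) * D u) u := by
      intro u
      have h1 : HasDerivAt (fun v => G (v + T)) (-(a u) * G (u + T)) u := by
        have h0 := (hG (u + T)).scomp u ((hasDerivAt_id u).add_const T)
        simp [ha_per] at h0 ⊢
        exact h0
      have h2 : HasDerivAt (fun v => G v * G T) ((-(a u) * G u) * G T) u :=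
        (hG u).mul_const (G T)
      have h3 := h1.sub h2
      have h4 : -(a u) * G (u + T) - (-(a u) * G u) * G T = -(a u) * D u := by
        simp [hD, mul_sub, mul_assoc]
      rwa [h4] at h3
    have hDc : ContinuousOn D (Set.Icc 0 s) :=
      ((hGc.comp (continuous_id.add continuous_const)).sub
        (hGc.mul continuous_const)).continuousOn
    have hgron := norm_le_gronwallBound_of_norm_deriv_right_le (δ := 0) (K := C') (ε := 0)
      (a := 0) (b := s) hDc
      (fun u _ => (hDd u).hasDerivWithinAt)
      (by simp [hD, hG0]) ?_
    · have h5 := hgron s (Set.mem_Icc.mpr ⟨hs, le_refl s⟩)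
      rw [gronwallBound_ε0_δ0] at h5
      have hD0 : D s = 0 := norm_eq_zero.mp (le_antisymm h5 (norm_nonneg _))
      exact sub_eq_zero.mp hD0
    · intro u hu
      have hb : ‖-(a u) * D u‖ ≤ ‖a u‖ * ‖D u‖ := by
        calc ‖-(a u) * D u‖ ≤ ‖-(a u)‖ * ‖D u‖ := norm_mul_le _ _
          _ = ‖a u‖ * ‖D u‖ := by rw [norm_neg]
      refine hb.trans ?_
      rw [add_zero]
      exact mul_le_mul_of_nonneg_right (hCa u ⟨hu.1, hu.2.le⟩) (norm_nonneg _)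
  -- injectivity of G t for t ≥ 0
  have hinj : ∀ t : ℝ, 0 ≤ t → ∀ x : Fin n → ℂ, G t *ᵥ x = 0 → x = 0 := by
    intro t ht x hx
    obtain ⟨C, hC⟩ := (isCompact_Icc (a := (0:ℝ)) (b := t)).exists_bound_of_continuousOn
      ha_cont.continuousOn
    set C' := max C 0 with hC'
    have hCa : ∀ u ∈ Set.Icc (0:ℝ) t, ‖a u‖ ≤ C' := fun u hu => (hC u hu).trans (le_max_left _ _)
    set L : Matrix (Fin n) (Fin n) ℂ →ₗ[ℂ] EuclideanSpace ℂ (Fin n) :=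
      { toFun := fun A => (WithLp.equiv 2 (Fin n → ℂ)).symm (A *ᵥ x)
        map_add' := fun A B => by simp [Matrix.add_mulVec]
        map_smul' := fun c A => by simp [Matrix.smul_mulVec] } with hL
    set Lc := LinearMap.toContinuousLinearMap L with hLc
    set Lcr := Lc.restrictScalars ℝ with hLcr
    set z : ℝ → EuclideanSpace ℂ (Fin n) := fun s => Lcr (G (t - s)) with hz
    have hzd : ∀ s, HasDerivAt z (Lcr ((a (t - s)) * G (t - s))) s := by
      intro s
      have h1 : HasDerivAt (fun u : ℝ => t - u) (-1 : ℝ) s := by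
        simpa using ((hasDerivAt_id s).const_sub t)
      have h2 : HasDerivAt (fun u : ℝ => G (t - u)) ((-1 : ℝ) • (-(a (t - s)) * G (t - s))) s :=
        (hG (t - s)).scomp s h1
      have h3 := (Lcr.hasFDerivAt (x := G (t - s))).comp_hasDerivAt s h2
      have h4 : (-1 : ℝ) • (-(a (t - s)) * G (t - s)) = (a (t - s)) * G (t - s) := by simp
      rw [h4] at h3
      exact h3
    have hzc : ContinuousOn z (Set.Icc 0 t) :=
      (Lcr.continuous.comp (hGc.comp (continuous_const.sub continuous_id))).continuousOn
    have hgron := norm_le_gronwallBound_of_norm_deriv_right_le (δ := 0) (K := C') (ε := 0)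
      (a := 0) (b := t) hzc (fun u _ => (hzd u).hasDerivWithinAt) ?_ ?_
    · have h5 := hgron t (Set.mem_Icc.mpr ⟨ht, le_refl t⟩)
      rw [gronwallBound_ε0_δ0] at h5
      have h6 : z t = 0 := norm_eq_zero.mp (le_antisymm h5 (norm_nonneg _))
      have h7 : (WithLp.equiv 2 (Fin n → ℂ)).symm (G 0 *ᵥ x) = 0 := by
        simpa [hz, hLcr, hLc, hL] using h6
      rw [hG0, Matrix.one_mulVec] at h7
      have h8 := congrArg (WithLp.equiv 2 (Fin n → ℂ)) h7
      simpa using h8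
    · have h9 : z 0 = 0 := by
        simp only [hz, sub_zero]
        show (WithLp.equiv 2 (Fin n → ℂ)).symm (G t *ᵥ x) = 0
        rw [hx]
        rfl
      simp [h9]
    · intro u hu
      have he : Lcr ((a (t - u)) * G (t - u)) =
          (WithLp.equiv 2 (Fin n → ℂ)).symm
            ((a (t - u)) *ᵥ ((WithLp.equiv 2 (Fin n → ℂ)) (z u))) := by
        show (WithLp.equiv 2 (Fin n → ℂ)).symm (((a (t - u)) * G (t - u)) *ᵥ x) = _
        rw [← Matrix.mulVec_mulVec]
        rfl
      rw [he, add_zero]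
      have h10 : ‖(WithLp.equiv 2 (Fin n → ℂ)).symm
          ((a (t - u)) *ᵥ ((WithLp.equiv 2 (Fin n → ℂ)) (z u)))‖
          ≤ ‖a (t - u)‖ * ‖z u‖ := Matrix.l2_opNorm_mulVec (a (t - u)) (z u)
      refine h10.trans ?_
      apply mul_le_mul_of_nonneg_right _ (norm_nonneg _)
      exact hCa _ ⟨by linarith [hu.1, hu.2], by linarith [hu.1]⟩
  -- positivity of norms, norm of one
  have hnorm1 : ‖(1 : Matrix (Fin n) (Fin n) ℂ)‖ = 1 := by
    rw [Matrix.cstar_norm_def, _root_.map_one]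
    exact ContinuousLinearMap.norm_id
  haveI : NormOneClass (Matrix (Fin n) (Fin n) ℂ) := ⟨hnorm1⟩
  have hGpos : ∀ t : ℝ, 0 ≤ t → 0 < ‖G t‖ := by
    intro t ht
    rw [norm_pos_iff]
    intro h
    have h1 := hinj t ht (fun _ => 1) (by rw [h, Matrix.zero_mulVec])
    have h2 := congrFun h1 ⟨0, hn⟩
    simp at h2
  have hle1 : ∀ u : ℝ, 0 ≤ u → ‖G u‖ ≤ 1 := by
    intro u hu
    have := hGmono 0 u hu
    rwa [hG0, hnorm1] at this
  haveI : Nontrivial (Matrix (Fin n) (Fin n) ℂ) := by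
    refine nontrivial_of_ne 1 0 ?_
    intro h
    rw [h, norm_zero] at hnorm1
    exact one_ne_zero hnorm1.symm
  -- G T is a unit
  have hunit : IsUnit (G T) := by
    rw [← Matrix.mulVec_injective_iff_isUnit]
    intro u v huv
    have h1 : G T *ᵥ (u - v) = 0 := by
      rw [Matrix.mulVec_sub, huv, sub_self]
    have := hinj T hT.le _ h1
    exact sub_eq_zero.mp this
  -- powers
  have hGkT : ∀ k : ℕ, G ((k : ℝ) * T) = (G T) ^ k := by
    intro k
    induction k with
    | zero => simpa using hG0
    | succ m ih =>
      have h1 : ((m + 1 : ℕ) : ℝ) * T = (m : ℝ) * T + T := by push_cast; ring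
      rw [h1, hcoc ((m : ℝ) * T) (by positivity), ih, pow_succ]
  -- spectral radius facts
  set r := (spectralRadius ℂ (G T)).toReal with hr
  have hrtop : spectralRadius ℂ (G T) ≠ ⊤ :=
    ne_top_of_le_ne_top ENNReal.coe_ne_top (spectrum.spectralRadius_le_nnnorm (𝕜 := ℂ) (G T))
  have hρ0 : spectralRadius ℂ (G T) ≠ 0 := by
    obtain ⟨μ, hμ⟩ := spectrum.nonempty (G T)
    have hμ0 : μ ≠ 0 := by
      rintro rfl
      exact (spectrum.zero_mem_iff ℂ).mp hμ hunit
    have hle : (‖μ‖₊ : ℝ≥0∞) ≤ spectralRadius ℂ (G T) :=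
      le_iSup₂ (f := fun k (_ : k ∈ spectrum ℂ (G T)) => (‖k‖₊ : ℝ≥0∞)) μ hμ
    intro h0
    rw [h0, le_zero_iff] at hle
    simp only [ENNReal.coe_eq_zero, nnnorm_eq_zero] at hle
    exact hμ0 hle
  have hrpos : 0 < r := ENNReal.toReal_pos hρ0 hrtop
  -- Gelfand's formula
  have hgel := spectrum.pow_nnnorm_pow_one_div_tendsto_nhds_spectralRadius (G T)
  have hg2 : Tendsto (fun k : ℕ => ‖(G T) ^ k‖ ^ ((1 : ℝ)/k)) atTop (𝓝 r) := by
    have h := (ENNReal.tendsto_toReal hrtop).comp hgel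
    refine h.congr fun k => ?_
    simp only [Function.comp_apply]
    rw [← ENNReal.toReal_rpow]
    simp
  have hpowpos : ∀ k : ℕ, 0 < ‖(G T) ^ k‖ := by
    intro k
    rw [← hGkT k]
    exact hGpos _ (by positivity)
  have hg3 : Tendsto (fun k : ℕ => Real.log (‖(G T) ^ k‖ ^ ((1 : ℝ)/k))) atTop
      (𝓝 (Real.log r)) := (Real.continuousAt_log hrpos.ne').tendsto.comp hg2
  have hg4 : Tendsto (fun k : ℕ => (1/(k : ℝ)) * Real.log ‖G ((k : ℝ) * T)‖) atTop
      (𝓝 (Real.log r)) := by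
    refine hg3.congr fun k => ?_
    rw [Real.log_rpow (hpowpos k), hGkT k]
  set d : ℕ → ℝ := fun k => -((1/(k : ℝ)) * Real.log ‖G ((k : ℝ) * T)‖) with hdd
  have hd : Tendsto d atTop (𝓝 (-Real.log r)) := hg4.neg
  -- the two squeezing sequences
  set lo : ℕ → ℝ := fun k => (1/(((k : ℝ) + 1) * T)) * (-(Real.log ‖G ((k : ℝ) * T)‖)) with hlodef
  set hi : ℕ → ℝ := fun k => (1/((k : ℝ) * T)) * (-(Real.log ‖G (((k : ℝ) + 1) * T)‖)) with hhidef
  have hlo : Tendsto lo atTop (𝓝 ((1/T) * (-Real.log r))) := by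
    have h1 : ∀ᶠ k : ℕ in atTop, (1/T) * (((k : ℝ)/((k : ℝ) + 1)) * d k) = lo k := by
      filter_upwards [eventually_ge_atTop 1] with k hk
      have hk0 : (k : ℝ) ≠ 0 := Nat.cast_ne_zero.mpr (by omega)
      have hk1 : (k : ℝ) + 1 ≠ 0 := by positivity
      simp only [hdd, hlodef]
      field_simp
    have h2 : Tendsto (fun k : ℕ => ((k : ℝ)/((k : ℝ) + 1))) atTop (𝓝 1) :=
      tendsto_natCast_div_add_atTop 1
    have h3 := (h2.mul hd).const_mul (1/T)
    rw [one_mul] at h3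
    exact Tendsto.congr' h1 h3
  have hhi : Tendsto hi atTop (𝓝 ((1/T) * (-Real.log r))) := by
    have hdk1 : Tendsto (fun k : ℕ => d (k + 1)) atTop (𝓝 (-Real.log r)) :=
      hd.comp (tendsto_add_atTop_nat 1)
    have h2 : Tendsto (fun k : ℕ => (((k : ℝ) + 1)/(k : ℝ))) atTop (𝓝 1) := by
      have h4 := tendsto_one_div_atTop_nhds_zero_nat.const_add (1 : ℝ)
      rw [add_zero] at h4
      refine h4.congr' ?_
      filter_upwards [eventually_ge_atTop 1] with k hk
      have hk0 : (k : ℝ) ≠ 0 := Nat.cast_ne_zero.mpr (by omega)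
      field_simp
    have h1 : ∀ᶠ k : ℕ in atTop, (1/T) * ((((k : ℝ) + 1)/(k : ℝ)) * d (k + 1)) = hi k := by
      filter_upwards [eventually_ge_atTop 1] with k hk
      have hk0 : (k : ℝ) ≠ 0 := Nat.cast_ne_zero.mpr (by omega)
      have hk1 : (k : ℝ) + 1 ≠ 0 := by positivity
      have hcast : ((k + 1 : ℕ) : ℝ) = (k : ℝ) + 1 := by push_cast; ring
      simp only [hdd, hhidef, hcast]
      field_simp
    have h3 := (h2.mul hdk1).const_mul (1/T)
    rw [one_mul] at h3
    exact Tendsto.congr' h1 h3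
  -- compose with floor
  have hfloor : Tendsto (fun t : ℝ => ⌊t/T⌋₊) atTop atTop :=
    tendsto_nat_floor_atTop.comp (tendsto_id.atTop_div_const hT)
  have hglo := hlo.comp hfloor
  have hghi := hhi.comp hfloor
  -- eventual bounds
  have hbound : ∀ᶠ t : ℝ in atTop,
      lo ⌊t/T⌋₊ ≤ -(1/t) * Real.log ‖G t‖ ∧ -(1/t) * Real.log ‖G t‖ ≤ hi ⌊t/T⌋₊ := by
    filter_upwards [eventually_ge_atTop T] with t ht
    have ht0 : 0 < t := hT.trans_le ht
    set k := ⌊t/T⌋₊ with hk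
    have hk1 : 1 ≤ k := by
      rw [hk]
      exact Nat.le_floor (by rw [Nat.cast_one]; exact (one_le_div hT).mpr ht)
    have hkR : (1 : ℝ) ≤ (k : ℝ) := by exact_mod_cast hk1
    have hkt : (k : ℝ) * T ≤ t := by
      have h1 : (k : ℝ) ≤ t/T := Nat.floor_le (div_nonneg ht0.le hT.le)
      calc (k : ℝ) * T ≤ (t/T) * T := mul_le_mul_of_nonneg_right h1 hT.le
        _ = t := div_mul_cancel₀ t hT.ne'
    have htk : t ≤ ((k : ℝ) + 1) * T := by
      have h1 : t/T < (k : ℝ) + 1 := Nat.lt_floor_add_one (t/T)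
      have := (div_lt_iff₀ hT).mp h1
      linarith
    have hkT0 : 0 < (k : ℝ) * T := by positivity
    have hkT1 : 0 < ((k : ℝ) + 1) * T := by positivity
    have hposk : 0 < ‖G ((k : ℝ) * T)‖ := hGpos _ (by positivity)
    have hposk1 : 0 < ‖G (((k : ℝ) + 1) * T)‖ := hGpos _ (by positivity)
    have hpost : 0 < ‖G t‖ := hGpos _ ht0.le
    have hlogk : Real.log ‖G ((k : ℝ) * T)‖ ≤ 0 :=
      Real.log_nonpos (norm_nonneg _) (hle1 _ (by positivity))
    have hlogk1 : Real.log ‖G (((k : ℝ) + 1) * T)‖ ≤ 0 :=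
      Real.log_nonpos (norm_nonneg _) (hle1 _ (by positivity))
    have hlogt : Real.log ‖G t‖ ≤ 0 := Real.log_nonpos (norm_nonneg _) (hle1 _ ht0.le)
    have he : -(1/t) * Real.log ‖G t‖ = (1/t) * (-Real.log ‖G t‖) := by ring
    constructor
    · -- lower bound
      have step1 : lo k ≤ (1/t) * (-(Real.log ‖G ((k : ℝ) * T)‖)) := by
        apply mul_le_mul_of_nonneg_right _ (by linarith)
        exact one_div_le_one_div_of_le ht0 htk
      have step2 : (1/t) * (-(Real.log ‖G ((k : ℝ) * T)‖)) ≤ (1/t) * (-Real.log ‖G t‖) := by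
        apply mul_le_mul_of_nonneg_left _ (by positivity)
        have := Real.log_le_log hpost (hGmono _ t hkt)
        linarith
      rw [he]
      exact step1.trans step2
    · -- upper bound
      have step1 : (1/t) * (-Real.log ‖G t‖) ≤ (1/t) * (-(Real.log ‖G (((k : ℝ) + 1) * T)‖)) := by
        apply mul_le_mul_of_nonneg_left _ (by positivity)
        have := Real.log_le_log hposk1 (hGmono t _ htk)
        linarith
      have step2 : (1/t) * (-(Real.log ‖G (((k : ℝ) + 1) * T)‖)) ≤ hi k := by
        apply mul_le_mul_of_nonneg_right _ (by linarith)
        exact one_div_le_one_div_of_le hkT0 hkt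
      rw [he]
      exact step1.trans step2
  have hfinal : Tendsto (fun t : ℝ => -(1/t) * Real.log ‖G t‖) atTop
      (𝓝 ((1/T) * (-Real.log r))) :=
    tendsto_of_tendsto_of_tendsto_of_le_of_le' hglo hghi
      (hbound.mono fun t h => h.1) (hbound.mono fun t h => h.2)
  have hval : (1/T) * (-Real.log r) = -(1/T) * Real.log r := by ring
  rw [hval] at hfinal
  exact hfinal
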